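/- (Menger's criterion) Let D : Matrix (Fin (d+1)) (Fin (d+1)) ℝ be a symmetric matrix with zero diagonal and strictly positive off-diagonal entries satisfying the triangle inequality D i k ≤ D i j + D j k for all i, j, k. Let A be the matrix of entrywise squares, A i j = (D i j)², and let Ā be the (d+2)×(d+2) matrix obtained by bordering A with a new first row and first column both equal to (0, 1, 1, …, 1). Then there exist points p : Fin (d+1) → EuclideanSpace ℝ (Fin d) with dist (p i) (p j) = D i j for all i, j if and only if (−1)^{d+1} · det Ā ≥ 0 and, for every index i₀, there exist points q : Fin (d+1) → EuclideanSpace ℝ (Fin (d−1)) indexed by the complementary d-element subset realizing the restriction of D to the indices other than i₀. -/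

import Mathlib

open Matrix

lemma Matrix.posSemidef_iff_eq_transpose_mul_self {n : Type*} [Fintype n] [DecidableEq n]
    {M : Matrix n n ℝ} : M.PosSemidef ↔ ∃ B : Matrix n n ℝ, M = Bᴴ * B := by
  constructor
  · intro hM
    refine ⟨Matrix.diagonal (fun i => Real.sqrt (hM.1.eigenvalues i)) *
      star (hM.1.eigenvectorUnitary : Matrix n n ℝ), ?_⟩
    conv_lhs => rw [hM.1.spectral_theorem, Unitary.conjStarAlgAut_apply]
    rw [Matrix.conjTranspose_mul, Matrix.diagonal_conjTranspose, ← Matrix.star_eq_conjTranspose,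
      star_star, Matrix.mul_assoc, Matrix.mul_assoc, ← Matrix.mul_assoc (Matrix.diagonal _),
      Matrix.diagonal_mul_diagonal]
    congr 3
    funext i
    simp [Real.mul_self_sqrt (hM.eigenvalues_nonneg i)]
  · rintro ⟨B, rfl⟩
    exact Matrix.posSemidef_conjTranspose_mul_self _

/-- PSD real matrices have nonnegative determinant. -/
lemma myDetNonneg {ι : Type*} [Fintype ι] [DecidableEq ι]
    {M : Matrix ι ι ℝ} (h : M.PosSemidef) : 0 ≤ M.det := by
  obtain ⟨B, rfl⟩ := Matrix.posSemidef_iff_eq_transpose_mul_self.mp h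
  have hB : Bᴴ = Bᵀ := by ext i j; simp [Matrix.conjTranspose_apply]
  rw [Matrix.det_mul, hB, Matrix.det_transpose]
  exact mul_self_nonneg _

/-- squared distance in Euclidean space as sum of squares -/
lemma dist_sq_eq {m : ℕ} (x y : EuclideanSpace ℝ (Fin m)) :
    dist x y ^ 2 = ∑ r, (x r - y r) ^ 2 := by
  rw [EuclideanSpace.dist_eq, Real.sq_sqrt (by positivity)]
  refine Finset.sum_congr rfl fun r _ => ?_
  rw [Real.dist_eq, sq_abs]

/-- The Gram matrix (relative to base point `0`) built from a distance matrix. -/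
noncomputable def gramD {n : ℕ} (E : Matrix (Fin (n+1)) (Fin (n+1)) ℝ) :
    Matrix (Fin n) (Fin n) ℝ :=
  Matrix.of fun i j => (E 0 i.succ ^ 2 + E 0 j.succ ^ 2 - E i.succ j.succ ^ 2) / 2

lemma gramD_apply {n : ℕ} (E : Matrix (Fin (n+1)) (Fin (n+1)) ℝ) (i j : Fin n) :
    gramD E i j = (E 0 i.succ ^ 2 + E 0 j.succ ^ 2 - E i.succ j.succ ^ 2) / 2 := rfl

/-- If points realize the distance matrix `E`, then `gramD E` is PSD. -/
lemma gramD_posSemidef {n m : ℕ} (E : Matrix (Fin (n+1)) (Fin (n+1)) ℝ)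
    (p : Fin (n+1) → EuclideanSpace ℝ (Fin m))
    (hp : ∀ i j, dist (p i) (p j) = E i j) :
    (gramD E).PosSemidef := by
  have key : gramD E = (Matrix.of fun (r : Fin m) (i : Fin n) => p i.succ r - p 0 r)ᴴ *
      (Matrix.of fun (r : Fin m) (i : Fin n) => p i.succ r - p 0 r) := by
    ext i j
    rw [Matrix.mul_apply, gramD_apply, ← hp, ← hp, ← hp,
      dist_sq_eq, dist_sq_eq, dist_sq_eq]
    simp only [Matrix.conjTranspose_apply, Matrix.of_apply, star_trivial]
    rw [div_eq_iff (two_ne_zero (α := ℝ)), Finset.sum_mul, ← Finset.sum_add_distrib,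
      ← Finset.sum_sub_distrib]
    exact Finset.sum_congr rfl fun r _ => by ring
  rw [key]
  exact Matrix.posSemidef_conjTranspose_mul_self _

/-- If `gramD E` is PSD, the distance matrix `E` is realizable in dimension `n`. -/
lemma realize_of_gramD {n : ℕ} (E : Matrix (Fin (n+1)) (Fin (n+1)) ℝ)
    (hs : ∀ i j, E i j = E j i) (hd : ∀ i, E i i = 0) (hnn : ∀ i j, 0 ≤ E i j)
    (hpsd : (gramD E).PosSemidef) :
    ∃ p : Fin (n+1) → EuclideanSpace ℝ (Fin n), ∀ i j, dist (p i) (p j) = E i j := by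
  obtain ⟨B, hB⟩ := Matrix.posSemidef_iff_eq_transpose_mul_self.mp hpsd
  set v : Fin n → EuclideanSpace ℝ (Fin n) := fun i => WithLp.toLp 2 (fun r => B r i) with hv
  have hvv : ∀ i j : Fin n, ∑ r, v i r * v j r = gramD E i j := by
    intro i j
    rw [hB, Matrix.mul_apply]
    exact Finset.sum_congr rfl fun r _ => by
      simp [Matrix.conjTranspose_apply, hv]
  set p : Fin (n+1) → EuclideanSpace ℝ (Fin n) := Fin.cons 0 v with hp
  refine ⟨p, fun i j => ?_⟩
  have key : dist (p i) (p j) ^ 2 = E i j ^ 2 := by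
    rw [dist_sq_eq]
    induction i using Fin.cases with
    | zero =>
      induction j using Fin.cases with
      | zero => simp [hd]
      | succ j =>
        have := hvv j j
        rw [gramD_apply] at this
        simp only [hp, Fin.cons_zero, Fin.cons_succ]
        have h2 : ∑ r, ((0 : EuclideanSpace ℝ (Fin n)) r - v j r) ^ 2
            = ∑ r, v j r * v j r := Finset.sum_congr rfl fun r _ => by
          simp [PiLp.zero_apply]; ring
        rw [h2, this, hd, hs 0 j.succ]
        ring
    | succ i =>
      induction j using Fin.cases with
      | zero =>
        have := hvv i i
        rw [gramD_apply] at this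
        simp only [hp, Fin.cons_zero, Fin.cons_succ]
        have h2 : ∑ r, (v i r - (0 : EuclideanSpace ℝ (Fin n)) r) ^ 2
            = ∑ r, v i r * v i r := Finset.sum_congr rfl fun r _ => by
          simp [PiLp.zero_apply]; ring
        rw [h2, this, hd, hs i.succ 0]
        ring
      | succ j =>
        have hii := hvv i i
        have hjj := hvv j j
        have hij := hvv i j
        rw [gramD_apply] at hii hjj hij
        simp only [hp, Fin.cons_succ]
        have h2 : ∑ r, (v i r - v j r) ^ 2
            = ∑ r, v i r * v i r + ∑ r, v j r * v j r - 2 * ∑ r, v i r * v j r := by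
          rw [Finset.mul_sum, ← Finset.sum_add_distrib, ← Finset.sum_sub_distrib]
          exact Finset.sum_congr rfl fun r _ => by ring
        rw [h2, hii, hjj, hij, hd i.succ, hd j.succ]
        ring
  have h1 : (0:ℝ) ≤ dist (p i) (p j) :=
    dist_nonneg
  nlinarith [hnn i j, key]

lemma offdiag_zero {n : ℕ} (G : Matrix (Fin n) (Fin n) ℝ) {i j : Fin n} (hij : i ≠ j)
    (hmin2 : ∀ (e : Fin 2 → Fin n), Function.Injective e → 0 ≤ (G.submatrix e e).det)
    (hii : G i i = 0) (hjj : G j j = 0) (hsym : G j i = G i j) : G i j = 0 := by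
  have hinj : Function.Injective (![i, j] : Fin 2 → Fin n) := by
    intro a b hab
    fin_cases a <;> fin_cases b <;>
      simp only [Matrix.cons_val_zero, Matrix.cons_val_one, Matrix.head_cons,
        Fin.mk_zero, Fin.mk_one] at hab ⊢ <;>
      first
        | rfl
        | exact (hij hab).elim
        | exact (hij hab.symm).elim
  have h2 := hmin2 ![i, j] hinj
  rw [Matrix.det_fin_two] at h2
  simp only [Matrix.submatrix_apply, Matrix.cons_val_zero, Matrix.cons_val_one,
    Matrix.head_cons] at h2
  rw [hii, hjj, hsym] at h2
  nlinarith [sq_nonneg (G i j)]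

lemma psd_of_minors : ∀ (n : ℕ) (G : Matrix (Fin n) (Fin n) ℝ), G.IsHermitian →
    (∀ (ι : Type) [Fintype ι] [DecidableEq ι] (e : ι → Fin n), Function.Injective e →
      0 ≤ (G.submatrix e e).det) → G.PosSemidef := by
  intro n
  induction n with
  | zero =>
    intro G hG _
    exact ⟨hG, fun x => by simp [Subsingleton.elim x 0]⟩
  | succ n IH =>
    intro G hG hmin
    have hGsymm : ∀ i j, G j i = G i j := fun i j => by
      simpa [Matrix.conjTranspose_apply] using congrFun (congrFun hG i) j
    have hdiag : ∀ k, 0 ≤ G k k := by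
      intro k
      have := hmin Unit (fun _ => k) (fun a b _ => rfl)
      rwa [Matrix.det_unique] at this
    by_cases hzero : ∀ k, G k k = 0
    · -- all diagonal zero forces G = 0
      have : G = 0 := by
        ext i j
        rcases eq_or_ne i j with rfl | hij
        · simp [hzero i]
        · have := offdiag_zero G hij (fun e he => hmin (Fin 2) e he)
            (hzero i) (hzero j) (hGsymm i j)
          simp [this]
      rw [this]; exact Matrix.PosSemidef.zero
    · push_neg at hzero
      obtain ⟨k, hk⟩ := hzero
      have ha : 0 < G k k := lt_of_le_of_ne (hdiag k) (Ne.symm hk)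
      set a : ℝ := G k k with haa
      -- the equivalence Unit ⊕ Fin n ≃ Fin (n+1)
      have hbij : Function.Bijective (Sum.elim (fun _ : Unit => k) k.succAbove) := by
        constructor
        · rintro (u | i) (v | j) hab
          · simp
          · exact absurd hab.symm (Fin.succAbove_ne k j)
          · exact absurd hab (Fin.succAbove_ne k i)
          · simpa using Fin.succAbove_right_injective (p := k) (by simpa using hab)
        · intro x
          rcases eq_or_ne x k with rfl | hx
          · exact ⟨Sum.inl (), rfl⟩
          · obtain ⟨j, hj⟩ := Fin.exists_succAbove_eq hx
            exact ⟨Sum.inr j, hj⟩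
      set E : Unit ⊕ Fin n ≃ Fin (n+1) := Equiv.ofBijective _ hbij with hE
      have hEl : E (Sum.inl ()) = k := rfl
      have hEr : ∀ i, E (Sum.inr i) = k.succAbove i := fun i => rfl
      set A : Matrix Unit Unit ℝ := Matrix.of fun _ _ => a with hA
      set B : Matrix Unit (Fin n) ℝ := Matrix.of fun _ j => G k (k.succAbove j) with hB
      set Dm : Matrix (Fin n) (Fin n) ℝ :=
        Matrix.of fun i j => G (k.succAbove i) (k.succAbove j) with hDm
      set S : Matrix (Fin n) (Fin n) ℝ := Matrix.of fun i j =>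
        G (k.succAbove i) (k.succAbove j) - G (k.succAbove i) k * a⁻¹ * G k (k.succAbove j)
        with hS
      have hApd : A.PosDef := by
        constructor
        · ext u v; simp [hA, Matrix.conjTranspose_apply]
        · intro x hx
          have hx0 : x () ≠ 0 := fun h0 => hx (Finsupp.ext fun u => by cases u; exact h0)
          have : (x.sum fun i xi => x.sum fun j xj => star xi * A i j * xj) = x () * a * x () := by
            simp [Finsupp.sum_fintype, hA]
          rw [this]
          have h2 : 0 < x () * x () := mul_self_pos.mpr hx0
          nlinarith
      have hAdet : A.det = a := Matrix.det_unique _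
      have hAinst : Invertible A :=
        Matrix.invertibleOfIsUnitDet A (by rw [hAdet]; exact (ne_of_gt ha).isUnit)
      have hAinv : A⁻¹ = Matrix.of fun _ _ => a⁻¹ := by
        refine Matrix.inv_eq_right_inv ?_
        ext u v
        simp [hA, Matrix.mul_apply, mul_inv_cancel₀ (ne_of_gt ha), Matrix.one_apply]
      -- S is the Schur complement
      have hSchur : Dm - Bᴴ * A⁻¹ * B = S := by
        ext i j
        simp only [Matrix.sub_apply, Matrix.mul_apply, hAinv, Matrix.conjTranspose_apply,
          Fintype.sum_unique, Matrix.of_apply, star_trivial, hDm, hB, hS]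
        rw [hGsymm (k.succAbove i) k]
      -- S satisfies the minors hypothesis
      have hSmin : ∀ (ι : Type) [Fintype ι] [DecidableEq ι] (e : ι → Fin n),
          Function.Injective e → 0 ≤ (S.submatrix e e).det := by
        intro ι _ _ e he
        set e' : Unit ⊕ ι → Fin (n+1) := Sum.elim (fun _ => k) (k.succAbove ∘ e) with he'
        have he'inj : Function.Injective e' := by
          rintro (u | i) (v | j) hab
          · cases u; cases v; rfl
          · exact absurd hab.symm (Fin.succAbove_ne k (e j))
          · exact absurd hab (Fin.succAbove_ne k (e i))
          · have := Fin.succAbove_right_injective (p := k) (by simpa [he'] using hab)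
            simp [he this]
        have hge := hmin (Unit ⊕ ι) e' he'inj
        have hblock : G.submatrix e' e' = Matrix.fromBlocks A (B.submatrix id e)
            (Bᴴ.submatrix e id) (Dm.submatrix e e) := by
          ext i j
          rcases i with u | i <;> rcases j with v | j
          · rfl
          · rfl
          · show G (k.succAbove (e i)) k = star (B () (e i))
            simp only [hB, Matrix.of_apply, star_trivial]
            exact hGsymm _ _
          · rfl
        rw [hblock, Matrix.det_fromBlocks₁₁, hAdet,
          Matrix.invOf_eq_nonsing_inv] at hge
        have hsub : Dm.submatrix e e - Bᴴ.submatrix e id * A⁻¹ * B.submatrix id e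
            = S.submatrix e e := by
          ext i j
          simp only [Matrix.sub_apply, Matrix.mul_apply, hAinv, Matrix.conjTranspose_apply,
            Fintype.sum_unique, Matrix.of_apply, star_trivial, hDm, hB, hS,
            Matrix.submatrix_apply, id]
          rw [hGsymm (k.succAbove (e i)) k]
        rw [hsub] at hge
        nlinarith [hge]
      have hSherm : S.IsHermitian := by
        ext i j
        simp only [Matrix.conjTranspose_apply, star_trivial, hS, Matrix.of_apply]
        rw [hGsymm (k.succAbove i) (k.succAbove j), hGsymm (k.succAbove j) k,
          hGsymm k (k.succAbove i)]
        ring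
      have hSpsd : S.PosSemidef := IH S hSherm hSmin
      -- assemble
      have hherm : ∀ j, (Bᴴ) j () = G (k.succAbove j) k := fun j => by
        simp [hB, Matrix.conjTranspose_apply, hGsymm (k.succAbove j) k]
      have hGblock : G.submatrix E E = Matrix.fromBlocks A B Bᴴ Dm := by
        ext i j
        rcases i with u | i <;> rcases j with v | j
        · rfl
        · rfl
        · show G (k.succAbove i) k = star (B () i)
          simp only [hB, Matrix.of_apply, star_trivial]
          exact hGsymm _ _
        · rfl
      have : (G.submatrix E E).PosSemidef := by
        rw [hGblock]
        rw [Matrix.PosDef.fromBlocks₁₁ B Dm hApd]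
        rw [hSchur]
        exact hSpsd
      exact (Matrix.posSemidef_submatrix_equiv E).mp this
def finSplit (n : ℕ) : Fin (n+1) ≃ Unit ⊕ Fin n :=
  (finSuccEquiv n).trans ((Equiv.optionEquivSumPUnit _).trans (Equiv.sumComm _ _))

@[simp] lemma finSplit_zero (n : ℕ) : finSplit n 0 = Sum.inl () := by
  simp [finSplit]

@[simp] lemma finSplit_succ (n : ℕ) (i : Fin n) : finSplit n i.succ = Sum.inr i := by
  simp [finSplit]

lemma det_pivot {n : ℕ} (M : Matrix (Fin (n+1)) (Fin (n+1)) ℝ) (h : M 0 0 = 1) :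
    M.det = (Matrix.of fun i j : Fin n => M i.succ j.succ - M i.succ 0 * M 0 j.succ).det := by
  have key : M = (Matrix.fromBlocks (1 : Matrix Unit Unit ℝ)
      (Matrix.of fun (_ : Unit) j => M 0 j.succ)
      (Matrix.of fun i (_ : Unit) => M i.succ 0)
      (Matrix.of fun i j : Fin n => M i.succ j.succ)).submatrix (finSplit n) (finSplit n) := by
    ext i j
    induction i using Fin.cases with
    | zero =>
      induction j using Fin.cases with
      | zero => simp [Matrix.fromBlocks, h]
      | succ j => simp [Matrix.fromBlocks]
    | succ i =>
      induction j using Fin.cases with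
      | zero => simp [Matrix.fromBlocks]
      | succ j => simp [Matrix.fromBlocks]
  rw [key, Matrix.det_submatrix_equiv_self, Matrix.det_fromBlocks_one₁₁]
  congr 1
  ext i j
  simp [Matrix.mul_apply]

/-- The Cayley–Menger determinant identity. -/
lemma bar_det {n : ℕ} (D : Matrix (Fin (n+1)) (Fin (n+1)) ℝ)
    (hsymm : ∀ i j, D i j = D j i) (hdiag : ∀ i, D i i = 0)
    (A : Matrix (Fin (n+1)) (Fin (n+1)) ℝ) (hA : ∀ i j, A i j = (D i j) ^ 2)
    (Abar : Matrix (Fin (n+2)) (Fin (n+2)) ℝ)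
    (hbar00 : Abar 0 0 = 0)
    (hbar0row : ∀ j : Fin (n+1), Abar 0 j.succ = 1)
    (hbar0col : ∀ i : Fin (n+1), Abar i.succ 0 = 1)
    (hbarA : ∀ i j : Fin (n+1), Abar i.succ j.succ = A i j) :
    Abar.det = (-1 : ℝ) ^ (n+1) * 2 ^ n * (gramD D).det := by
  set σ : Equiv.Perm (Fin (n+2)) := Equiv.swap 0 1 with hσ
  set M : Matrix (Fin (n+2)) (Fin (n+2)) ℝ := Abar.submatrix σ id with hM
  have hone : (1 : Fin (n+2)) = (0 : Fin (n+1)).succ := by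
    rw [Fin.succ_zero_eq_one]
  have hσfix : ∀ i : Fin n, σ (i.succ.succ) = i.succ.succ := by
    intro i
    refine Equiv.swap_apply_of_ne_of_ne (Fin.succ_ne_zero _) ?_
    rw [hone]
    exact fun h => Fin.succ_ne_zero i (Fin.succ_injective _ h)
  have hperm : M.det = -Abar.det := by
    rw [hM, Matrix.det_permute, hσ, Equiv.Perm.sign_swap (Fin.zero_ne_one)]
    push_cast
    ring
  have hM00 : M 0 0 = 1 := by
    show Abar (σ 0) 0 = 1
    rw [hσ, Equiv.swap_apply_left, hone]
    exact hbar0col 0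
  set M₂ : Matrix (Fin (n+1)) (Fin (n+1)) ℝ :=
    Matrix.of fun i j => M i.succ j.succ - M i.succ 0 * M 0 j.succ with hM₂
  have hd1 : M.det = M₂.det := det_pivot M hM00
  have hM₂00 : M₂ 0 0 = 1 := by
    show M (0:Fin (n+1)).succ (0:Fin (n+1)).succ - M (0:Fin (n+1)).succ 0 * M 0 (0:Fin (n+1)).succ = 1
    rw [← hone]
    show Abar (σ 1) 1 - Abar (σ 1) 0 * Abar (σ 0) 1 = 1
    rw [hσ, Equiv.swap_apply_left, Equiv.swap_apply_right, hone]
    rw [hbar0row 0, hbar00]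
    ring
  set M₃ : Matrix (Fin n) (Fin n) ℝ :=
    Matrix.of fun i j => M₂ i.succ j.succ - M₂ i.succ 0 * M₂ 0 j.succ with hM₃
  have hd2 : M₂.det = M₃.det := det_pivot M₂ hM₂00
  have hM₃eq : M₃ = (-2 : ℝ) • gramD D := by
    ext i j
    have e1 : M i.succ.succ j.succ.succ = A i.succ j.succ := by
      show Abar (σ i.succ.succ) j.succ.succ = _
      rw [hσfix]; exact hbarA _ _
    have e2 : M i.succ.succ 0 = 1 := by
      show Abar (σ i.succ.succ) 0 = 1
      rw [hσfix]; exact hbar0col _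
    have e3 : ∀ x : Fin (n+1), M 0 x.succ = A 0 x := by
      intro x
      show Abar (σ 0) x.succ = _
      rw [hσ, Equiv.swap_apply_left, hone]; exact hbarA 0 x
    have e4 : M i.succ.succ (0:Fin (n+1)).succ = A i.succ 0 := by
      show Abar (σ i.succ.succ) (0:Fin (n+1)).succ = _
      rw [hσfix]; exact hbarA _ _
    have e5 : M 0 (0:Fin (n+1)).succ = A 0 0 := e3 0
    show M₂ i.succ j.succ - M₂ i.succ 0 * M₂ 0 j.succ = -2 * gramD D i j
    have f1 : M₂ i.succ j.succ = A i.succ j.succ - A 0 j.succ := by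
      show M i.succ.succ j.succ.succ - M i.succ.succ 0 * M 0 j.succ.succ = _
      rw [e1, e2, e3 j.succ]; ring
    have f2 : M₂ i.succ 0 = A i.succ 0 := by
      show M i.succ.succ (0:Fin (n+1)).succ - M i.succ.succ 0 * M 0 (0:Fin (n+1)).succ = _
      rw [e4, e2, e5, hA 0 0, hdiag]; ring
    have f3 : M₂ 0 j.succ = 1 := by
      show M (0:Fin (n+1)).succ j.succ.succ - M (0:Fin (n+1)).succ 0 * M 0 j.succ.succ = _
      rw [← hone]
      have g1 : M 1 j.succ.succ = 1 := by
        show Abar (σ 1) j.succ.succ = 1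
        rw [hσ, Equiv.swap_apply_right]
        exact hbar0row _
      have g2 : M 1 0 = 0 := by
        show Abar (σ 1) 0 = 0
        rw [hσ, Equiv.swap_apply_right]
        exact hbar00
      rw [g1, g2]; ring
    rw [f1, f2, f3, gramD_apply, hA, hA, hA, hsymm i.succ 0]
    ring
  have hd3 : M₃.det = (-2 : ℝ) ^ n * (gramD D).det := by
    rw [hM₃eq, Matrix.det_smul]
    simp
  have : -Abar.det = (-2 : ℝ) ^ n * (gramD D).det := by
    rw [← hperm, hd1, hd2, hd3]
  have h2 : Abar.det = -((-2 : ℝ) ^ n * (gramD D).det) := by linarith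
  rw [h2, neg_pow (2:ℝ)]
  ring

set_option maxHeartbeats 1000000 in
theorem stmt_7 (d : ℕ)
    (D : Matrix (Fin (d + 1)) (Fin (d + 1)) ℝ)
    (hsymm : ∀ i j, D i j = D j i)
    (hdiag : ∀ i, D i i = 0)
    (hpos : ∀ i j, i ≠ j → 0 < D i j)
    (htri : ∀ i j k, D i k ≤ D i j + D j k)
    (A : Matrix (Fin (d + 1)) (Fin (d + 1)) ℝ)
    (hA : ∀ i j, A i j = (D i j) ^ 2)
    (Abar : Matrix (Fin (d + 2)) (Fin (d + 2)) ℝ)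
    (hbar00 : Abar 0 0 = 0)
    (hbar0row : ∀ j : Fin (d + 1), Abar 0 j.succ = 1)
    (hbar0col : ∀ i : Fin (d + 1), Abar i.succ 0 = 1)
    (hbarA : ∀ i j : Fin (d + 1), Abar i.succ j.succ = A i j) :
    (∃ p : Fin (d + 1) → EuclideanSpace ℝ (Fin d),
        ∀ i j, dist (p i) (p j) = D i j) ↔
      ((-1 : ℝ) ^ (d + 1) * Abar.det ≥ 0 ∧
        ∀ i₀ : Fin (d + 1),
          ∃ q : {i : Fin (d + 1) // i ≠ i₀} → EuclideanSpace ℝ (Fin (d - 1)),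
            ∀ i j, dist (q i) (q j) = D i.1 j.1) := by
  cases d with
  | zero =>
    have lhs : ∃ p : Fin 1 → EuclideanSpace ℝ (Fin 0), ∀ i j, dist (p i) (p j) = D i j := by
      refine ⟨fun _ => 0, fun i j => ?_⟩
      have hij : i = j := Fin.ext (by omega)
      subst hij
      rw [dist_self, hdiag]
    have rhs1 : (-1:ℝ)^(0+1) * Abar.det ≥ 0 := by
      rw [Matrix.det_fin_two]
      have h11 : Abar 1 1 = 0 := by
        have h := hbarA 0 0
        rw [Fin.succ_zero_eq_one] at h
        rw [h, hA, hdiag]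
        ring
      have h01 : Abar 0 1 = 1 := by
        have h := hbar0row 0; rwa [Fin.succ_zero_eq_one] at h
      have h10 : Abar 1 0 = 1 := by
        have h := hbar0col 0; rwa [Fin.succ_zero_eq_one] at h
      rw [hbar00, h11, h01, h10]
      norm_num
    have hall : ∀ x y : Fin (0+1), x = y := fun x y => Fin.ext (by omega)
    refine ⟨fun _ => ⟨rhs1, fun i₀ => ?_⟩, fun _ => lhs⟩
    exact ⟨fun i => absurd (hall i.1 i₀) i.2,
      fun i j => absurd (hall i.1 i₀) i.2⟩
  | succ e =>
    have hDnn : ∀ i j, 0 ≤ D i j := by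
      intro i j
      rcases eq_or_ne i j with rfl | h
      · exact le_of_eq (hdiag i).symm
      · exact (hpos i j h).le
    have hdetid := bar_det D hsymm hdiag A hA Abar hbar00 hbar0row hbar0col hbarA
    have hsimpl : ∀ x : ℝ, (-1:ℝ)^(e+1+1) * ((-1:ℝ)^(e+1+1) * 2^(e+1) * x) = 2^(e+1) * x := by
      intro x
      rw [← mul_assoc, ← mul_assoc, ← mul_pow]
      norm_num
    constructor
    · rintro ⟨p, hp⟩
      have hGpsd : (gramD D).PosSemidef := gramD_posSemidef D p hp
      constructor
      · rw [ge_iff_le, hdetid, hsimpl]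
        exact mul_nonneg (by positivity) (myDetNonneg hGpsd)
      · intro i₀
        set E' : Matrix (Fin (e+1)) (Fin (e+1)) ℝ :=
          Matrix.of fun a b => D (i₀.succAbove a) (i₀.succAbove b) with hE'
        obtain ⟨q', hq'⟩ := realize_of_gramD E' (fun a b => hsymm _ _) (fun a => hdiag _)
          (fun a b => hDnn _ _)
          (gramD_posSemidef E' (fun a => p (i₀.succAbove a)) (fun a b => hp _ _))
        refine ⟨fun i => q' (Fin.exists_succAbove_eq i.2).choose, fun i j => ?_⟩
        have si := (Fin.exists_succAbove_eq i.2).choose_spec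
        have sj := (Fin.exists_succAbove_eq j.2).choose_spec
        rw [hq']
        show D _ _ = _
        rw [si, sj]
    · rintro ⟨hdet, hres⟩
      have hdetG : 0 ≤ (gramD D).det := by
        rw [ge_iff_le, hdetid, hsimpl] at hdet
        have h2 : (0:ℝ) < 2^(e+1) := by positivity
        nlinarith
      have hHk : ∀ k : Fin (e+1),
          ((gramD D).submatrix k.succAbove k.succAbove).PosSemidef := by
        intro k
        obtain ⟨q, hq⟩ := hres k.succ
        set E'' : Matrix (Fin (e+1)) (Fin (e+1)) ℝ :=
          Matrix.of fun a b => D (k.succ.succAbove a) (k.succ.succAbove b) with hE''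
        have hpsd := gramD_posSemidef E''
          (fun a => q ⟨k.succ.succAbove a, Fin.succAbove_ne _ a⟩)
          (fun a b => hq _ _)
        have heq : gramD E'' = (gramD D).submatrix k.succAbove k.succAbove := by
          ext a b
          have z : k.succ.succAbove 0 = 0 :=
            Fin.succAbove_ne_zero_zero (Fin.succ_ne_zero k)
          have sfn : ∀ x : Fin e, k.succ.succAbove x.succ = (k.succAbove x).succ :=
            fun x => Fin.succ_succAbove_succ k x
          show (E'' 0 a.succ ^ 2 + E'' 0 b.succ ^ 2 - E'' a.succ b.succ ^ 2) / 2
            = (D 0 (k.succAbove a).succ ^ 2 + D 0 (k.succAbove b).succ ^ 2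
                - D (k.succAbove a).succ (k.succAbove b).succ ^ 2) / 2
          simp only [hE'', Matrix.of_apply, z, sfn]
        rw [← heq]
        exact hpsd
      have hmin : ∀ (ι : Type) [Fintype ι] [DecidableEq ι] (f : ι → Fin (e+1)),
          Function.Injective f → 0 ≤ ((gramD D).submatrix f f).det := by
        intro ι _ _ f hf
        by_cases hsurj : Function.Surjective f
        · have h := Matrix.det_submatrix_equiv_self (Equiv.ofBijective f ⟨hf, hsurj⟩) (gramD D)
          rw [show (((Equiv.ofBijective f ⟨hf, hsurj⟩) : ι ≃ Fin (e+1)) : ι → Fin (e+1)) = f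
            from rfl] at h
          rw [h]
          exact hdetG
        · rw [Function.Surjective] at hsurj
          push_neg at hsurj
          obtain ⟨k, hk⟩ := hsurj
          have heq : (gramD D).submatrix f f
              = ((gramD D).submatrix k.succAbove k.succAbove).submatrix
                (fun a => (Fin.exists_succAbove_eq (hk a)).choose)
                (fun a => (Fin.exists_succAbove_eq (hk a)).choose) := by
            ext a b
            simp only [Matrix.submatrix_apply]
            rw [(Fin.exists_succAbove_eq (hk a)).choose_spec,
              (Fin.exists_succAbove_eq (hk b)).choose_spec]
          rw [heq]
          exact myDetNonneg ((hHk k).submatrix _)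
      have hherm : (gramD D).IsHermitian := by
        ext i j
        simp only [Matrix.conjTranspose_apply, star_trivial]
        rw [gramD_apply, gramD_apply, hsymm j.succ i.succ]
        ring
      exact realize_of_gramD D hsymm hdiag hDnn (psd_of_minors (e+1) (gramD D) hherm hmin)
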